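/- Every maximum-length plateau-k-rollercoaster subsequence of a word w corresponds to a path in NEG(w): if u = w[i_1]w[i_2]...w[i_m] is a plateau-k-rollercoaster subsequence of w of maximum length m, embedded at the canonical (greedy leftmost) positions, then for each consecutive pair, (v_{i_t}, v_{i_{t+1}}) is an edge of NEG(w). -/

import Mathlib

namespace RollerCoaster

abbrev Word := List ℕ

def weakIncr (u : Word) : Prop := u.Chain' (· ≤ ·)

def weakDecr (u : Word) : Prop := u.Chain' (· ≥ ·)

def plateauRun (u : Word) : Prop := weakIncr u ∨ weakDecr u

/-- The factor `w[i..j]` (0-indexed, inclusive). -/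
def factorAt (w : Word) (i j : ℕ) : Word := (w.drop i).take (j + 1 - i)

/-- `w[i..j]` is a maximal plateau-run: weakly monotone and not extendable
to a weakly monotone factor in either direction. -/
def maxRunAt (w : Word) (i j : ℕ) : Prop :=
  i ≤ j ∧ j < w.length ∧ plateauRun (factorAt w i j) ∧
  (i = 0 ∨ ¬ plateauRun (factorAt w (i - 1) j)) ∧
  (j + 1 = w.length ∨ ¬ plateauRun (factorAt w i (j + 1)))

/-- Number of distinct letters of a word. -/
def distinctCount (u : Word) : ℕ := u.dedup.length

/-- `w` is a plateau-`k`-rollercoaster: every maximal plateau-run contains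
at least `k` distinct letters. -/
def IsPlateauRC (k : ℕ) (w : Word) : Prop :=
  ∀ i j, maxRunAt w i j → k ≤ distinctCount (factorAt w i j)

def subseqAt (w : Word) (idx : List ℕ) : Word := idx.map (fun t => w.getD t 0)

def embeds (w : Word) (idx : List ℕ) : Prop :=
  idx.Pairwise (· < ·) ∧ ∀ t ∈ idx, t < w.length

/-! ### helpers -/

def IncOn (w : Word) (i j : ℕ) : Prop :=
  ∀ p, i ≤ p → p < j → w.getD p 0 ≤ w.getD (p+1) 0

def DecOn (w : Word) (i j : ℕ) : Prop :=
  ∀ p, i ≤ p → p < j → w.getD (p+1) 0 ≤ w.getD p 0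

lemma IncOn.mono {w : Word} {i j i' j' : ℕ} (h : IncOn w i j) (hi : i ≤ i') (hj : j' ≤ j) :
    IncOn w i' j' := fun p h1 h2 => h p (le_trans hi h1) (lt_of_lt_of_le h2 hj)

lemma DecOn.mono {w : Word} {i j i' j' : ℕ} (h : DecOn w i j) (hi : i ≤ i') (hj : j' ≤ j) :
    DecOn w i' j' := fun p h1 h2 => h p (le_trans hi h1) (lt_of_lt_of_le h2 hj)

lemma length_factorAt {w : Word} {i j : ℕ} (hj : j < w.length) :
    (factorAt w i j).length = j + 1 - i := by
  simp only [factorAt, List.length_take, List.length_drop]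
  omega

lemma getD_factorAt {w : Word} {i j p : ℕ} (hj : j < w.length) (hp : p < j + 1 - i) :
    (factorAt w i j).getD p 0 = w.getD (i + p) 0 := by
  have h1 : p < (factorAt w i j).length := by rw [length_factorAt hj]; exact hp
  have h2 : i + p < w.length := by omega
  rw [List.getD_eq_getElem _ _ h1, List.getD_eq_getElem _ _ h2]
  simp only [factorAt, List.getElem_take, List.getElem_drop]

lemma weakIncr_factorAt {w : Word} {i j : ℕ} (hj : j < w.length) :
    weakIncr (factorAt w i j) ↔ IncOn w i j := by
  rw [weakIncr, List.Chain', List.isChain_iff_getElem]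
  constructor
  · intro h p hip hpj
    have hlen : (factorAt w i j).length = j + 1 - i := length_factorAt hj
    have h1 : p - i + 1 < (factorAt w i j).length := by omega
    have := h (p - i) h1
    rw [← List.getD_eq_getElem _ 0, ← List.getD_eq_getElem _ 0] at this
    rw [getD_factorAt hj (by omega), getD_factorAt hj (by omega)] at this
    have e1 : i + (p - i) = p := by omega
    have e2 : i + (p - i + 1) = p + 1 := by omega
    rwa [e1, e2] at this
  · intro h p hp
    have hlen : (factorAt w i j).length = j + 1 - i := length_factorAt hj
    rw [← List.getD_eq_getElem _ 0, ← List.getD_eq_getElem _ 0]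
    rw [getD_factorAt hj (by omega), getD_factorAt hj (by omega)]
    have e2 : i + (p + 1) = (i + p) + 1 := by omega
    rw [e2]
    exact h (i + p) (by omega) (by omega)

lemma weakDecr_factorAt {w : Word} {i j : ℕ} (hj : j < w.length) :
    weakDecr (factorAt w i j) ↔ DecOn w i j := by
  rw [weakDecr, List.Chain', List.isChain_iff_getElem]
  constructor
  · intro h p hip hpj
    have hlen : (factorAt w i j).length = j + 1 - i := length_factorAt hj
    have h1 : p - i + 1 < (factorAt w i j).length := by omega
    have := h (p - i) h1
    rw [← List.getD_eq_getElem _ 0, ← List.getD_eq_getElem _ 0] at this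
    rw [getD_factorAt hj (by omega), getD_factorAt hj (by omega)] at this
    have e1 : i + (p - i) = p := by omega
    have e2 : i + (p - i + 1) = p + 1 := by omega
    rwa [e1, e2] at this
  · intro h p hp
    have hlen : (factorAt w i j).length = j + 1 - i := length_factorAt hj
    rw [← List.getD_eq_getElem _ 0, ← List.getD_eq_getElem _ 0]
    rw [getD_factorAt hj (by omega), getD_factorAt hj (by omega)]
    have e2 : i + (p + 1) = (i + p) + 1 := by omega
    rw [e2]
    exact h (i + p) (by omega) (by omega)

lemma plateau_factorAt {w : Word} {i j : ℕ} (hj : j < w.length) :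
    plateauRun (factorAt w i j) ↔ (IncOn w i j ∨ DecOn w i j) := by
  rw [plateauRun, weakIncr_factorAt hj, weakDecr_factorAt hj]

lemma maxRunAt_iff {w : Word} {i j : ℕ} :
    maxRunAt w i j ↔ i ≤ j ∧ j < w.length ∧ (IncOn w i j ∨ DecOn w i j) ∧
      (i = 0 ∨ ¬ (IncOn w (i-1) j ∨ DecOn w (i-1) j)) ∧
      (j + 1 = w.length ∨ ¬ (IncOn w i (j+1) ∨ DecOn w i (j+1))) := by
  unfold maxRunAt
  constructor
  · rintro ⟨h1, h2, h3, h4, h5⟩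
    refine ⟨h1, h2, (plateau_factorAt h2).1 h3, ?_, ?_⟩
    · rcases h4 with h | h
      · exact Or.inl h
      · exact Or.inr (fun c => h ((plateau_factorAt h2).2 c))
    · rcases h5 with h | h
      · exact Or.inl h
      · by_cases hl : j + 1 = w.length
        · exact Or.inl hl
        · have hj1 : j + 1 < w.length := by omega
          exact Or.inr (fun c => h ((plateau_factorAt hj1).2 c))
  · rintro ⟨h1, h2, h3, h4, h5⟩
    refine ⟨h1, h2, (plateau_factorAt h2).2 h3, ?_, ?_⟩
    · rcases h4 with h | h
      · exact Or.inl h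
      · exact Or.inr (fun c => h ((plateau_factorAt h2).1 c))
    · rcases h5 with h | h
      · exact Or.inl h
      · by_cases hl : j + 1 = w.length
        · exact Or.inl hl
        · have hj1 : j + 1 < w.length := by omega
          exact Or.inr (fun c => h ((plateau_factorAt hj1).1 c))

lemma mem_factorAt {w : Word} {i j : ℕ} {y : ℕ} (hj : j < w.length) :
    y ∈ factorAt w i j ↔ ∃ p, i ≤ p ∧ p ≤ j ∧ w.getD p 0 = y := by
  rw [List.mem_iff_getElem]
  constructor
  · rintro ⟨p, hp, he⟩
    rw [length_factorAt hj] at hp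
    refine ⟨i + p, by omega, by omega, ?_⟩
    rw [← getD_factorAt hj hp, List.getD_eq_getElem _ _ (by rw [length_factorAt hj]; exact hp)]
    exact he
  · rintro ⟨p, hp1, hp2, he⟩
    refine ⟨p - i, by rw [length_factorAt hj]; omega, ?_⟩
    rw [← List.getD_eq_getElem _ 0, getD_factorAt hj (by omega)]
    have e : i + (p - i) = p := by omega
    rw [e]; exact he

lemma distinctCount_le {u v : Word} (h : ∀ y ∈ u, y ∈ v) :
    distinctCount u ≤ distinctCount v := by
  have hs : u.toFinset ⊆ v.toFinset := by
    intro y hy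
    rw [List.mem_toFinset] at hy ⊢
    exact h y hy
  have := Finset.card_le_card hs
  rwa [List.card_toFinset, List.card_toFinset] at this


/-- Inserting a letter `x` with `u[s] ≤ x < u[s+1]` between positions `s` and `s+1`
preserves being a plateau-k-rollercoaster. -/
lemma insert_up {k : ℕ} {u u' : Word} {s x : ℕ}
    (hs : s + 1 < u.length)
    (hlen : u'.length = u.length + 1)
    (h1 : ∀ p, p ≤ s → u'.getD p 0 = u.getD p 0)
    (h2 : u'.getD (s+1) 0 = x)
    (h3 : ∀ p, s + 1 ≤ p → u'.getD (p+1) 0 = u.getD p 0)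
    (ha : u.getD s 0 ≤ x) (hb : x < u.getD (s+1) 0)
    (hrc : IsPlateauRC k u) : IsPlateauRC k u' := by
  have hbb : u'.getD (s+2) 0 = u.getD (s+1) 0 := by
    have := h3 (s+1) le_rfl
    rwa [show s+1+1 = s+2 by omega] at this
  have h3' : ∀ q, s + 2 ≤ q → u'.getD q 0 = u.getD (q-1) 0 := by
    intro q hq
    have := h3 (q-1) (by omega)
    rwa [show q - 1 + 1 = q by omega] at this
  have insUp : ∀ i' j', i' ≤ s → s + 1 ≤ j' → IncOn u i' j' → IncOn u' i' (j'+1) := by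
    intro i' j' hi' hj' h p hp1 hp2
    rcases lt_trichotomy p s with hc | hc | hc
    · rw [h1 p (by omega), h1 (p+1) (by omega)]
      exact h p hp1 (by omega)
    · subst hc
      rw [h1 p le_rfl, h2]; exact ha
    · rcases eq_or_lt_of_le (show s + 1 ≤ p by omega) with hc' | hc'
      · rw [← hc', h2, show s+1+1 = s+2 by omega, hbb]
        exact le_of_lt hb
      · rw [h3' p (by omega), h3 p (by omega)]
        have := h (p-1) (by omega) (by omega)
        rwa [show p - 1 + 1 = p by omega] at this
  have eqIncA : ∀ i' j', j' ≤ s → (IncOn u' i' j' ↔ IncOn u i' j') := by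
    intro i' j' hj'
    constructor <;> intro h p hp1 hp2
    · have := h p hp1 hp2
      rwa [h1 p (by omega), h1 (p+1) (by omega)] at this
    · rw [h1 p (by omega), h1 (p+1) (by omega)]; exact h p hp1 hp2
  have eqDecA : ∀ i' j', j' ≤ s → (DecOn u' i' j' ↔ DecOn u i' j') := by
    intro i' j' hj'
    constructor <;> intro h p hp1 hp2
    · have := h p hp1 hp2
      rwa [h1 p (by omega), h1 (p+1) (by omega)] at this
    · rw [h1 p (by omega), h1 (p+1) (by omega)]; exact h p hp1 hp2
  have eqIncB : ∀ i' j', s + 2 ≤ i' → (IncOn u' i' j' ↔ IncOn u (i'-1) (j'-1)) := by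
    intro i' j' hi'
    constructor
    · intro h q hq1 hq2
      have := h (q+1) (by omega) (by omega)
      rwa [h3 q (by omega), h3 (q+1) (by omega)] at this
    · intro h p hp1 hp2
      rw [h3' p (by omega), h3 p (by omega)]
      have := h (p-1) (by omega) (by omega)
      rwa [show p - 1 + 1 = p by omega] at this
  have eqDecB : ∀ i' j', s + 2 ≤ i' → (DecOn u' i' j' ↔ DecOn u (i'-1) (j'-1)) := by
    intro i' j' hi'
    constructor
    · intro h q hq1 hq2
      have := h (q+1) (by omega) (by omega)
      rwa [h3 q (by omega), h3 (q+1) (by omega)] at this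
    · intro h p hp1 hp2
      rw [h3' p (by omega), h3 p (by omega)]
      have := h (p-1) (by omega) (by omega)
      rwa [show p - 1 + 1 = p by omega] at this
  intro i j hmr
  rw [maxRunAt_iff] at hmr
  obtain ⟨hij, hjl, hrun, hleft, hright⟩ := hmr
  rw [hlen] at hjl hright
  by_cases hA : j ≤ s
  · -- Case A : run entirely left of the inserted letter
    have hm : maxRunAt u i j := by
      rw [maxRunAt_iff]
      refine ⟨hij, by omega, ?_, ?_, ?_⟩
      · rcases hrun with h | h
        · exact Or.inl ((eqIncA i j hA).1 h)
        · exact Or.inr ((eqDecA i j hA).1 h)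
      · rcases hleft with h | h
        · exact Or.inl h
        · right; rintro (c | c)
          · exact h (Or.inl ((eqIncA (i-1) j hA).2 c))
          · exact h (Or.inr ((eqDecA (i-1) j hA).2 c))
      · have hR : ¬ (IncOn u' i (j+1) ∨ DecOn u' i (j+1)) := by
          rcases hright with h | h
          · omega
          · exact h
        right
        by_cases hjs : j < s
        · rintro (c | c)
          · exact hR (Or.inl ((eqIncA i (j+1) (by omega)).2 c))
          · exact hR (Or.inr ((eqDecA i (j+1) (by omega)).2 c))
        · have hjs' : j = s := by omega
          rintro (c | c)
          · apply hR; left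
            intro p hp1 hp2
            by_cases hp : p = s
            · rw [hp, h1 s le_rfl, h2]; exact ha
            · rw [h1 p (by omega), h1 (p+1) (by omega)]
              exact c p hp1 (by omega)
          · have := c s (by omega) (by omega)
            omega
    refine le_trans (hrc i j hm) (distinctCount_le ?_)
    intro y hy
    rw [mem_factorAt (show j < u.length by omega)] at hy
    obtain ⟨p, hp1, hp2, he⟩ := hy
    rw [mem_factorAt (show j < u'.length by rw [hlen]; omega)]
    exact ⟨p, hp1, hp2, by rw [h1 p (by omega)]; exact he⟩
  · by_cases hB : s + 2 ≤ i
    · -- Case B : run entirely right of the inserted letter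
      have hm : maxRunAt u (i-1) (j-1) := by
        rw [maxRunAt_iff]
        refine ⟨by omega, by omega, ?_, ?_, ?_⟩
        · rcases hrun with h | h
          · exact Or.inl ((eqIncB i j hB).1 h)
          · exact Or.inr ((eqDecB i j hB).1 h)
        · right
          have h : ¬ (IncOn u' (i-1) j ∨ DecOn u' (i-1) j) := by
            rcases hleft with h | h
            · omega
            · exact h
          by_cases hi3 : s + 3 ≤ i
          · rintro (c | c)
            · exact h (Or.inl ((eqIncB (i-1) j (by omega)).2 c))
            · exact h (Or.inr ((eqDecB (i-1) j (by omega)).2 c))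
          · have hi2 : i = s + 2 := by omega
            have hnI : ¬ IncOn u' i j := by
              intro hI
              apply h; left
              intro p hp1 hp2
              rcases eq_or_lt_of_le hp1 with hc | hc
              · rw [← hc, hi2, show s+2-1 = s+1 by omega, h2,
                  show s+1+1 = s+2 by omega, hbb]
                exact le_of_lt hb
              · exact hI p (by omega) hp2
            rintro (c | c)
            · apply hnI
              rw [eqIncB i j (by omega)]
              exact c.mono (by omega) le_rfl
            · have := c s (by omega) (by omega)
              omega
        · rcases hright with h | h
          · exact Or.inl (by omega)
          · right; rintro (c | c)
            · have c' : IncOn u (i-1) (j+1-1) := by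
                rwa [show j - 1 + 1 = j + 1 - 1 by omega] at c
              exact h (Or.inl ((eqIncB i (j+1) hB).2 c'))
            · have c' : DecOn u (i-1) (j+1-1) := by
                rwa [show j - 1 + 1 = j + 1 - 1 by omega] at c
              exact h (Or.inr ((eqDecB i (j+1) hB).2 c'))
      refine le_trans (hrc _ _ hm) (distinctCount_le ?_)
      intro y hy
      rw [mem_factorAt (show j - 1 < u.length by omega)] at hy
      obtain ⟨p, hp1, hp2, he⟩ := hy
      rw [mem_factorAt (show j < u'.length by rw [hlen]; omega)]
      refine ⟨p+1, by omega, by omega, ?_⟩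
      rw [h3 p (by omega)]; exact he
    · -- remaining: i ≤ s+1 ≤ j
      by_cases hC1 : i = s + 1
      · -- impossible : run starts at the inserted letter
        exfalso
        have hInc : IncOn u' (s+1) j := by
          rcases hrun with h | h
          · rwa [hC1] at h
          · intro p hp1 hp2
            exfalso
            have := h (s+1) (by omega) (by omega)
            rw [show s+1+1 = s+2 by omega, hbb, h2] at this
            omega
        have hL : ¬ (IncOn u' (i-1) j ∨ DecOn u' (i-1) j) := by
          rcases hleft with h | h
          · omega
          · exact h
        apply hL; left
        rw [hC1, show s+1-1 = s by omega]
        intro p hp1 hp2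
        rcases eq_or_lt_of_le hp1 with hc | hc
        · rw [← hc, h1 s le_rfl, h2]; exact ha
        · exact hInc p (by omega) hp2
      · by_cases hC3 : j = s + 1
        · -- Case C3 : run ends at the inserted letter
          subst hC3
          have hil : i ≤ s := by omega
          have hR : ¬ (IncOn u' i (s+1+1) ∨ DecOn u' i (s+1+1)) := by
            rcases hright with h | h
            · omega
            · exact h
          have hnI : ¬ IncOn u' i (s+1) := by
            intro hI
            apply hR; left
            intro p hp1 hp2
            by_cases hp : p = s + 1
            · rw [hp, h2, show s+1+1 = s+2 by omega, hbb]
              exact le_of_lt hb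
            · exact hI p hp1 (by omega)
          have hD : DecOn u' i (s+1) := by
            rcases hrun with h | h
            · exact absurd h hnI
            · exact h
          have hax : u.getD s 0 = x := by
            have := hD s (by omega) (by omega)
            rw [h2, h1 s le_rfl] at this
            omega
          have hm : maxRunAt u i s := by
            rw [maxRunAt_iff]
            refine ⟨by omega, by omega, Or.inr ?_, ?_, ?_⟩
            · intro p hp1 hp2
              have := hD p hp1 (by omega)
              rwa [h1 p (by omega), h1 (p+1) (by omega)] at this
            · rcases hleft with h | h
              · exact Or.inl h
              · right; rintro (c | c)
                · apply h; left
                  intro p hp1 hp2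
                  by_cases hp : p = s
                  · rw [hp, h1 s le_rfl, h2]; exact ha
                  · rw [h1 p (by omega), h1 (p+1) (by omega)]
                    exact c p hp1 (by omega)
                · apply h; right
                  intro p hp1 hp2
                  by_cases hp : p = s
                  · rw [hp, h2, h1 s le_rfl, hax]
                  · rw [h1 p (by omega), h1 (p+1) (by omega)]
                    exact c p hp1 (by omega)
            · right; rintro (c | c)
              · apply hnI
                intro p hp1 hp2
                by_cases hp : p = s
                · rw [hp, h1 s le_rfl, h2]; exact ha
                · rw [h1 p (by omega), h1 (p+1) (by omega)]
                  exact c p hp1 (by omega)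
              · have := c s (by omega) (by omega)
                omega
          refine le_trans (hrc i s hm) (distinctCount_le ?_)
          intro y hy
          rw [mem_factorAt (show s < u.length by omega)] at hy
          obtain ⟨p, hp1, hp2, he⟩ := hy
          rw [mem_factorAt (show s + 1 < u'.length by rw [hlen]; omega)]
          exact ⟨p, hp1, by omega, by rw [h1 p (by omega)]; exact he⟩
        · -- Case C4 : run spans the inserted letter
          have hil : i ≤ s := by omega
          have hjs : s + 2 ≤ j := by omega
          have hI : IncOn u' i j := by
            rcases hrun with h | h
            · exact h
            · exfalso
              have := h (s+1) (by omega) (by omega)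
              rw [show s+1+1 = s+2 by omega, hbb, h2] at this
              omega
          have hm : maxRunAt u i (j-1) := by
            rw [maxRunAt_iff]
            refine ⟨by omega, by omega, Or.inl ?_, ?_, ?_⟩
            · intro p hp1 hp2
              rcases lt_trichotomy p s with hc | hc | hc
              · have := hI p hp1 (by omega)
                rwa [h1 p (by omega), h1 (p+1) (by omega)] at this
              · subst hc
                omega
              · have := hI (p+1) (by omega) (by omega)
                rwa [h3 p (by omega), h3 (p+1) (by omega)] at this
            · rcases hleft with h | h
              · exact Or.inl h
              · right; rintro (c | c)
                · apply h; left
                  have := insUp (i-1) (j-1) (by omega) (by omega) c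
                  rwa [show j - 1 + 1 = j by omega] at this
                · have := c s (by omega) (by omega)
                  omega
            · rcases hright with h | h
              · exact Or.inl (by omega)
              · right; rintro (c | c)
                · apply h; left
                  have c' : IncOn u i j := by
                    rwa [show j - 1 + 1 = j by omega] at c
                  exact insUp i j (by omega) (by omega) c'
                · have c' : DecOn u i j := by
                    rwa [show j - 1 + 1 = j by omega] at c
                  have := c' s (by omega) (by omega)
                  omega
          refine le_trans (hrc i (j-1) hm) (distinctCount_le ?_)
          intro y hy
          rw [mem_factorAt (show j - 1 < u.length by omega)] at hy
          obtain ⟨p, hp1, hp2, he⟩ := hy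
          rw [mem_factorAt (show j < u'.length by rw [hlen]; omega)]
          by_cases hp : p ≤ s
          · exact ⟨p, hp1, by omega, by rw [h1 p hp]; exact he⟩
          · refine ⟨p+1, by omega, by omega, ?_⟩
            rw [h3 p (by omega)]; exact he

/-! ### Dualization -/

lemma mem_of_mem_factorAt {w : Word} {i j y : ℕ} (h : y ∈ factorAt w i j) : y ∈ w :=
  List.drop_subset i w (List.take_subset _ _ h)

lemma bound_getD {u : Word} {N : ℕ} (hN : ∀ y ∈ u, y ≤ N) {p : ℕ} (hp : p < u.length) :
    u.getD p 0 ≤ N := by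
  rw [List.getD_eq_getElem _ _ hp]
  exact hN _ (List.getElem_mem hp)

lemma dual_getD {u : Word} {N : ℕ} {p : ℕ} (hp : p < u.length) :
    (u.map (N - ·)).getD p 0 = N - u.getD p 0 := by
  rw [List.getD_eq_getElem _ _ (by simpa using hp), List.getD_eq_getElem _ _ hp,
    List.getElem_map]

lemma dual_IncOn {u : Word} {N : ℕ} (hN : ∀ y ∈ u, y ≤ N) {i j : ℕ} (hj : j < u.length) :
    IncOn (u.map (N - ·)) i j ↔ DecOn u i j := by
  constructor <;> intro h p hp1 hp2 <;> have H := h p hp1 hp2 <;>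
    have b1 : u.getD p 0 ≤ N := bound_getD hN (by omega) <;>
    have b2 : u.getD (p+1) 0 ≤ N := bound_getD hN (by omega)
  · rw [dual_getD (by omega), dual_getD (by omega)] at H
    omega
  · rw [dual_getD (by omega), dual_getD (by omega)]
    omega

lemma dual_DecOn {u : Word} {N : ℕ} (hN : ∀ y ∈ u, y ≤ N) {i j : ℕ} (hj : j < u.length) :
    DecOn (u.map (N - ·)) i j ↔ IncOn u i j := by
  constructor <;> intro h p hp1 hp2 <;> have H := h p hp1 hp2 <;>
    have b1 : u.getD p 0 ≤ N := bound_getD hN (by omega) <;>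
    have b2 : u.getD (p+1) 0 ≤ N := bound_getD hN (by omega)
  · rw [dual_getD (by omega), dual_getD (by omega)] at H
    omega
  · rw [dual_getD (by omega), dual_getD (by omega)]
    omega

lemma dual_plateau {u : Word} {N : ℕ} (hN : ∀ y ∈ u, y ≤ N) {i j : ℕ} (hj : j < u.length) :
    (IncOn (u.map (N - ·)) i j ∨ DecOn (u.map (N - ·)) i j) ↔ (IncOn u i j ∨ DecOn u i j) := by
  rw [dual_IncOn hN hj, dual_DecOn hN hj, or_comm]

lemma distinctCount_map_of_injOn {l : List ℕ} {f : ℕ → ℕ}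
    (hf : ∀ a ∈ l, ∀ b ∈ l, f a = f b → a = b) : distinctCount (l.map f) = distinctCount l := by
  induction l with
  | nil => rfl
  | cons a t ih =>
    have hf' : ∀ a ∈ t, ∀ b ∈ t, f a = f b → a = b := fun x hx y hy =>
      hf x (List.mem_cons_of_mem _ hx) y (List.mem_cons_of_mem _ hy)
    by_cases h : a ∈ t
    · rw [List.map_cons]
      unfold distinctCount
      rw [List.dedup_cons_of_mem (List.mem_map.2 ⟨a, h, rfl⟩), List.dedup_cons_of_mem h]
      exact ih hf'
    · have h2 : f a ∉ t.map f := by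
        intro hc
        obtain ⟨b, hb, he⟩ := List.mem_map.1 hc
        have hba : b = a := hf b (List.mem_cons_of_mem _ hb) a List.mem_cons_self he
        exact h (hba ▸ hb)
      rw [List.map_cons]
      unfold distinctCount
      rw [List.dedup_cons_of_notMem h2, List.dedup_cons_of_notMem h]
      simp only [List.length_cons]
      exact congrArg Nat.succ (ih hf')

lemma dual_distinct {u : Word} {N : ℕ} (hN : ∀ y ∈ u, y ≤ N) {i j : ℕ} :
    distinctCount (factorAt (u.map (N - ·)) i j) = distinctCount (factorAt u i j) := by
  have hf : factorAt (u.map (N - ·)) i j = (factorAt u i j).map (N - ·) := by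
    simp [factorAt, List.map_take, List.map_drop]
  rw [hf]
  apply distinctCount_map_of_injOn
  intro a ha b hb hab
  have ha' : a ≤ N := hN _ (mem_of_mem_factorAt ha)
  have hb' : b ≤ N := hN _ (mem_of_mem_factorAt hb)
  omega

lemma dual_maxRun {u : Word} {N : ℕ} (hN : ∀ y ∈ u, y ≤ N) {i j : ℕ} :
    maxRunAt (u.map (N - ·)) i j ↔ maxRunAt u i j := by
  rw [maxRunAt_iff, maxRunAt_iff, List.length_map]
  constructor <;> rintro ⟨hij, hjl, hrun, hl, hr⟩ <;> refine ⟨hij, hjl, ?_, ?_, ?_⟩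
  · exact (dual_plateau hN hjl).1 hrun
  · rcases hl with h | h
    · exact Or.inl h
    · exact Or.inr (fun c => h ((dual_plateau hN hjl).2 c))
  · rcases hr with h | h
    · exact Or.inl h
    · by_cases hc : j + 1 = u.length
      · exact Or.inl hc
      · exact Or.inr (fun c => h ((dual_plateau hN (by omega)).2 c))
  · exact (dual_plateau hN hjl).2 hrun
  · rcases hl with h | h
    · exact Or.inl h
    · exact Or.inr (fun c => h ((dual_plateau hN hjl).1 c))
  · rcases hr with h | h
    · exact Or.inl h
    · by_cases hc : j + 1 = u.length
      · exact Or.inl hc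
      · exact Or.inr (fun c => h ((dual_plateau hN (by omega)).1 c))

lemma dual_rc {u : Word} {N k : ℕ} (hN : ∀ y ∈ u, y ≤ N) :
    IsPlateauRC k (u.map (N - ·)) ↔ IsPlateauRC k u := by
  constructor <;> intro h i j hm
  · have := h i j ((dual_maxRun hN).2 hm)
    rwa [dual_distinct hN] at this
  · rw [dual_distinct hN]
    exact h i j ((dual_maxRun hN).1 hm)

/-- Inserting a letter `x` with `u[s+1] < x ≤ u[s]` between positions `s` and `s+1`
preserves being a plateau-k-rollercoaster. -/
lemma insert_down {k : ℕ} {u u' : Word} {s x : ℕ}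
    (hs : s + 1 < u.length)
    (hlen : u'.length = u.length + 1)
    (h1 : ∀ p, p ≤ s → u'.getD p 0 = u.getD p 0)
    (h2 : u'.getD (s+1) 0 = x)
    (h3 : ∀ p, s + 1 ≤ p → u'.getD (p+1) 0 = u.getD p 0)
    (ha : x ≤ u.getD s 0) (hb : u.getD (s+1) 0 < x)
    (hrc : IsPlateauRC k u) : IsPlateauRC k u' := by
  set N := (x :: u ++ u').sum with hNdef
  have hNu : ∀ y ∈ u, y ≤ N := by
    intro y hy
    exact List.single_le_sum (fun _ _ => Nat.zero_le _) _ (by simp [hy])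
  have hNu' : ∀ y ∈ u', y ≤ N := by
    intro y hy
    exact List.single_le_sum (fun _ _ => Nat.zero_le _) _ (by simp [hy])
  have hNx : x ≤ N := List.single_le_sum (fun _ _ => Nat.zero_le _) _ (by simp)
  have key : IsPlateauRC k (u'.map (N - ·)) := by
    apply insert_up (u := u.map (N - ·)) (s := s) (x := N - x)
      (by simpa using hs) (by simpa using hlen)
    · intro p hp
      rw [dual_getD (by omega), dual_getD (by omega), h1 p hp]
    · rw [dual_getD (by rw [hlen]; omega), h2]
    · intro p hp
      by_cases hpl : p < u.length
      · rw [dual_getD (by rw [hlen]; omega), dual_getD hpl, h3 p hp]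
      · rw [List.getD_eq_default, List.getD_eq_default] <;> simp <;> omega
    · rw [dual_getD (by omega)]
      have := bound_getD hNu (show s < u.length by omega)
      omega
    · rw [dual_getD (by omega)]
      have := bound_getD hNu (show s + 1 < u.length by omega)
      omega
    · exact (dual_rc hNu).2 hrc
  exact (dual_rc hNu').1 key

/-! ### Sublist machinery -/

lemma sublist_aux (I : List ℕ) : ∀ (w : Word) (c : ℕ), I.Pairwise (· < ·) →
    (∀ z ∈ I, c ≤ z ∧ z < w.length) → (I.map (fun z => w.getD z 0)).Sublist (w.drop c) := by
  induction I with
  | nil => intro w c _ _; simp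
  | cons z J ih =>
    intro w c hp hb
    have hz := hb z List.mem_cons_self
    obtain ⟨hzJ, hpJ⟩ := List.pairwise_cons.1 hp
    have hih : (J.map (fun z => w.getD z 0)).Sublist (w.drop (z+1)) := by
      apply ih w (z+1) hpJ
      intro y hy
      exact ⟨hzJ y hy, (hb y (List.mem_cons_of_mem _ hy)).2⟩
    have hdz : w.drop z = w.getD z 0 :: w.drop (z+1) := by
      rw [List.getD_eq_getElem _ _ hz.2]
      exact List.drop_eq_getElem_cons hz.2
    have h1 : ((z :: J).map (fun z => w.getD z 0)).Sublist (w.drop z) := by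
      rw [List.map_cons, hdz]
      exact hih.cons₂ _
    have h2 : (w.drop z).Sublist (w.drop c) := by
      have := List.drop_sublist (z - c) (w.drop c)
      rwa [List.drop_drop, show c + (z - c) = z by omega] at this
    exact h1.trans h2

lemma sublist_subseq {w : Word} {I : List ℕ} (hs : I.Pairwise (· < ·))
    (hb : ∀ z ∈ I, z < w.length) : (subseqAt w I).Sublist w := by
  have := sublist_aux I w 0 hs (fun z hz => ⟨Nat.zero_le _, hb z hz⟩)
  simpa [subseqAt] using this

/-! ### The key no-insertion lemma -/

lemma no_insert {w : Word} {k m : ℕ}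
    (hmax : ∀ s : Word, s.Sublist w → IsPlateauRC k s → s.length ≤ m)
    {I : List ℕ} (hemb : embeds w I) (hlen : I.length = m)
    (hrc : IsPlateauRC k (subseqAt w I))
    {t : ℕ} (ht : t + 1 < I.length) {t' : ℕ}
    (h₁ : I.getD t 0 < t') (h₂ : t' < I.getD (t+1) 0) (htw : t' < w.length)
    (hspec : ((subseqAt w I).getD t 0 ≤ w.getD t' 0 ∧
        w.getD t' 0 < (subseqAt w I).getD (t+1) 0) ∨
      ((subseqAt w I).getD (t+1) 0 < w.getD t' 0 ∧
        w.getD t' 0 ≤ (subseqAt w I).getD t 0)) :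
    False := by
  obtain ⟨hsort, hbound⟩ := hemb
  have hmono : ∀ p q, p < q → q < I.length → I.getD p 0 < I.getD q 0 := by
    intro p q hpq hq
    have := List.pairwise_iff_get.1 hsort ⟨p, by omega⟩ ⟨q, hq⟩ hpq
    simpa only [List.get_eq_getElem, List.getD_eq_getElem I 0 (show p < I.length by omega),
      List.getD_eq_getElem I 0 hq] using this
  have hle : ∀ p q, p ≤ q → q < I.length → I.getD p 0 ≤ I.getD q 0 := by
    intro p q hpq hq
    rcases eq_or_lt_of_le hpq with h | h
    · rw [h]
    · exact le_of_lt (hmono p q h hq)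
  set I' : List ℕ := I.take (t+1) ++ t' :: I.drop (t+1) with hI'
  have hTl : (I.take (t+1)).length = t + 1 := by rw [List.length_take]; omega
  have hI'len : I'.length = I.length + 1 := by
    simp only [hI', List.length_append, List.length_cons, List.length_drop, hTl]
    omega
  have e1 : ∀ p, p ≤ t → I'.getD p 0 = I.getD p 0 := by
    intro p hp
    rw [List.getD_eq_getElem?_getD, List.getD_eq_getElem?_getD, hI',
      List.getElem?_append_left (by omega : p < (I.take (t+1)).length),
      List.getElem?_take, if_pos (by omega)]
  have e2 : I'.getD (t+1) 0 = t' := by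
    rw [List.getD_eq_getElem?_getD, hI',
      List.getElem?_append_right (by omega : (I.take (t+1)).length ≤ t + 1),
      hTl, show t + 1 - (t+1) = 0 by omega, List.getElem?_cons_zero, Option.getD_some]
  have e3 : ∀ p, t + 1 ≤ p → I'.getD (p+1) 0 = I.getD p 0 := by
    intro p hp
    rw [List.getD_eq_getElem?_getD, List.getD_eq_getElem?_getD, hI',
      List.getElem?_append_right (by omega : (I.take (t+1)).length ≤ p + 1),
      hTl, show p + 1 - (t+1) = (p - (t+1)) + 1 by omega, List.getElem?_cons_succ,
      List.getElem?_drop, show t + 1 + (p - (t+1)) = p by omega]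
  -- pairwise of I'
  have hI'sort : I'.Pairwise (· < ·) := by
    rw [List.pairwise_iff_get]
    intro ⟨p, hpl⟩ ⟨q, hql⟩ hpq
    simp only [List.get_eq_getElem] at *
    rw [← List.getD_eq_getElem I' 0 hpl, ← List.getD_eq_getElem I' 0 hql]
    rw [hI'len] at hpl hql
    have hpq' : p < q := hpq
    by_cases hq1 : q ≤ t
    · rw [e1 p (by omega), e1 q (by omega)]
      exact hmono p q hpq' (by omega)
    · by_cases hq2 : q = t + 1
      · rw [hq2, e2, e1 p (by omega)]
        calc I.getD p 0 ≤ I.getD t 0 := hle p t (by omega) (by omega)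
          _ < t' := h₁
      · -- q ≥ t + 2
        have hq3 : t + 1 ≤ q - 1 := by omega
        have eq' : I'.getD q 0 = I.getD (q-1) 0 := by
          have := e3 (q-1) hq3
          rwa [show q - 1 + 1 = q by omega] at this
        rw [eq']
        have hb' : t' < I.getD (q-1) 0 := by
          calc t' < I.getD (t+1) 0 := h₂
            _ ≤ I.getD (q-1) 0 := hle (t+1) (q-1) (by omega) (by omega)
        by_cases hp1 : p ≤ t
        · rw [e1 p (by omega)]
          calc I.getD p 0 ≤ I.getD t 0 := hle p t (by omega) (by omega)
            _ < t' := h₁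
            _ < I.getD (q-1) 0 := hb'
        · by_cases hp2 : p = t + 1
          · rw [hp2, e2]; exact hb'
          · have hp3 : t + 1 ≤ p - 1 := by omega
            have ep' : I'.getD p 0 = I.getD (p-1) 0 := by
              have := e3 (p-1) hp3
              rwa [show p - 1 + 1 = p by omega] at this
            rw [ep']
            exact hmono (p-1) (q-1) (by omega) (by omega)
  have hI'bound : ∀ z ∈ I', z < w.length := by
    intro z hz
    rw [hI', List.mem_append, List.mem_cons] at hz
    rcases hz with h | h | h
    · exact hbound z (List.take_subset _ _ h)
    · omega
    · exact hbound z (List.drop_subset _ _ h)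
  set u := subseqAt w I with hu
  set u' := subseqAt w I' with hu'
  have hul : u.length = I.length := by simp [hu, subseqAt]
  have hu'l : u'.length = I'.length := by simp [hu', subseqAt]
  have hugetD : ∀ p, p < I.length → u.getD p 0 = w.getD (I.getD p 0) 0 := by
    intro p hp
    rw [hu, subseqAt, List.getD_eq_getElem _ _ (by simpa using hp), List.getElem_map,
      List.getD_eq_getElem I 0 hp]
  have hu'getD : ∀ p, p < I'.length → u'.getD p 0 = w.getD (I'.getD p 0) 0 := by
    intro p hp
    rw [hu', subseqAt, List.getD_eq_getElem _ _ (by simpa using hp), List.getElem_map,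
      List.getD_eq_getElem I' 0 hp]
  have hs' : t + 1 < u.length := by omega
  have hlen' : u'.length = u.length + 1 := by omega
  have H1 : ∀ p, p ≤ t → u'.getD p 0 = u.getD p 0 := by
    intro p hp
    rw [hugetD p (by omega), hu'getD p (by omega), e1 p hp]
  have H2 : u'.getD (t+1) 0 = w.getD t' 0 := by
    rw [hu'getD (t+1) (by omega), e2]
  have H3 : ∀ p, t + 1 ≤ p → u'.getD (p+1) 0 = u.getD p 0 := by
    intro p hp
    by_cases hpl : p < I.length
    · rw [hugetD p hpl, hu'getD (p+1) (by omega), e3 p hp]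
    · rw [List.getD_eq_default _ _ (by omega), List.getD_eq_default _ _ (by omega)]
  have hrc' : IsPlateauRC k u' := by
    rcases hspec with ⟨hA, hB⟩ | ⟨hA, hB⟩
    · exact insert_up hs' hlen' H1 H2 H3 hA hB hrc
    · exact insert_down hs' hlen' H1 H2 H3 hB hA hrc
  have hsub : u'.Sublist w := sublist_subseq hI'sort hI'bound
  have := hmax u' hsub hrc'
  omega

/-- `w` is a plateau-`(k,h)_ξ`-rollercoaster (`ξ = ↑` iff `up = true`):
the last (possibly incomplete) run has orientation `ξ` and exactly `h`
distinct letters if `h < k` (at least `k` if `h = k`), and every other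
maximal run is a plateau-`k`-run. -/
def IsPRCkh (k h : ℕ) (up : Bool) (w : Word) : Prop :=
  w ≠ [] ∧
  ∃ i, i < w.length ∧
    (if up then
        weakIncr (factorAt w i (w.length - 1)) ∧
          (i = 0 ∨ ¬ weakIncr (factorAt w (i - 1) (w.length - 1)))
      else
        weakDecr (factorAt w i (w.length - 1)) ∧
          (i = 0 ∨ ¬ weakDecr (factorAt w (i - 1) (w.length - 1)))) ∧
    (if h < k then distinctCount (factorAt w i (w.length - 1)) = h
      else k ≤ distinctCount (factorAt w i (w.length - 1))) ∧
    ∀ i' j', maxRunAt w i' j' →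
      (i' = i ∧ j' = w.length - 1) ∨ k ≤ distinctCount (factorAt w i' j')

def upEdge (w : Word) (i j : ℕ) : Prop :=
  i < j ∧ j < w.length ∧ w.getD i 0 < w.getD j 0 ∧
  ∀ j', i < j' → j' < j → ¬ (w.getD i 0 ≤ w.getD j' 0 ∧ w.getD j' 0 ≤ w.getD j 0)

def eqEdge (w : Word) (i j : ℕ) : Prop :=
  i < j ∧ j < w.length ∧ w.getD i 0 = w.getD j 0 ∧
  ∀ j', i < j' → j' < j → w.getD j' 0 ≠ w.getD j 0

def downEdge (w : Word) (i j : ℕ) : Prop :=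
  i < j ∧ j < w.length ∧ w.getD j 0 < w.getD i 0 ∧
  ∀ j', i < j' → j' < j → ¬ (w.getD j 0 ≤ w.getD j' 0 ∧ w.getD j' 0 ≤ w.getD i 0)

def negEdge (w : Word) (i j : ℕ) : Prop :=
  upEdge w i j ∨ eqEdge w i j ∨ downEdge w i j

/-- a maximum-length plateau-k-rollercoaster subsequence, embedded
at greedy leftmost positions, corresponds to a path in NEG(w). -/
theorem stmt9 (w : Word) (k m : ℕ) (hk : 3 ≤ k)
    (hmax : ∀ s : Word, s.Sublist w → IsPlateauRC k s → s.length ≤ m)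
    (I : List ℕ) (hne : I ≠ []) (hemb : embeds w I) (hlen : I.length = m)
    (hrc : IsPlateauRC k (subseqAt w I))
    (hfirst : ∀ t < I.head hne, w.getD t 0 ≠ w.getD (I.head hne) 0)
    (hgreedy : I.Chain' (fun a b => ∀ t, a < t → t < b → w.getD t 0 ≠ w.getD b 0)) :
    I.Chain' (negEdge w) := by
  rw [List.Chain', List.isChain_iff_getElem]
  intro t htl
  have ht : t + 1 < I.length := by omega
  rw [← List.getD_eq_getElem I 0 (show t < I.length by omega), ← List.getD_eq_getElem I 0 ht]
  obtain ⟨hsort, hbound⟩ := hemb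
  have hmono : I.getD t 0 < I.getD (t+1) 0 := by
    have := List.pairwise_iff_get.1 hsort ⟨t, by omega⟩ ⟨t+1, ht⟩ (by exact Nat.lt_succ_self t)
    simp only [List.get_eq_getElem] at this
    rwa [← List.getD_eq_getElem I 0 (show t < I.length by omega),
      ← List.getD_eq_getElem I 0 ht] at this
  have hbw : I.getD (t+1) 0 < w.length := by
    apply hbound
    rw [List.getD_eq_getElem I 0 ht]
    exact List.getElem_mem ht
  have hgr : ∀ z, I.getD t 0 < z → z < I.getD (t+1) 0 →
      w.getD z 0 ≠ w.getD (I.getD (t+1) 0) 0 := by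
    have := List.isChain_iff_getElem.1 hgreedy t htl
    rwa [← List.getD_eq_getElem I 0 (show t < I.length by omega),
      ← List.getD_eq_getElem I 0 ht] at this
  have hut : (subseqAt w I).getD t 0 = w.getD (I.getD t 0) 0 := by
    rw [subseqAt, List.getD_eq_getElem _ _ (by simpa using (show t < I.length by omega)),
      List.getElem_map, List.getD_eq_getElem I 0 (show t < I.length by omega)]
  have hut1 : (subseqAt w I).getD (t+1) 0 = w.getD (I.getD (t+1) 0) 0 := by
    rw [subseqAt, List.getD_eq_getElem _ _ (by simpa using ht),
      List.getElem_map, List.getD_eq_getElem I 0 ht]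
  rcases lt_trichotomy (w.getD (I.getD t 0) 0) (w.getD (I.getD (t+1) 0) 0) with hc | hc | hc
  · left
    refine ⟨hmono, hbw, hc, ?_⟩
    rintro z hz1 hz2 ⟨c1, c2⟩
    have hne' : w.getD z 0 < w.getD (I.getD (t+1) 0) 0 := lt_of_le_of_ne c2 (hgr z hz1 hz2)
    exact no_insert hmax ⟨hsort, hbound⟩ hlen hrc ht hz1 hz2 (by omega)
      (Or.inl ⟨by rw [hut]; exact c1, by rw [hut1]; exact hne'⟩)
  · exact Or.inr (Or.inl ⟨hmono, hbw, hc, hgr⟩)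
  · right; right
    refine ⟨hmono, hbw, hc, ?_⟩
    rintro z hz1 hz2 ⟨c1, c2⟩
    have hne' : w.getD (I.getD (t+1) 0) 0 < w.getD z 0 :=
      lt_of_le_of_ne c1 (Ne.symm (hgr z hz1 hz2))
    exact no_insert hmax ⟨hsort, hbound⟩ hlen hrc ht hz1 hz2 (by omega)
      (Or.inr ⟨by rw [hut1]; exact hne', by rw [hut]; exact c2⟩)
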